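/- Let (Θ̂, Γ̂) be a local minimizer of Q₁(λ₁, λ₂, ·, ·). Then there exists a local minimizer Ω̂ = (Ω̂^(1), …, Ω̂^(K)) of Q₃(2(λ₁λ₂)^{1/2}, ·) such that Ω̂_jl^(k) = θ̂_jl Γ̂_jl^(k) for all 1 ≤ j, l ≤ p and 1 ≤ k ≤ K. -/

import Mathlib

open scoped BigOperators
open Matrix

noncomputable section

namespace JF

/-- Frobenius norm of a real matrix. -/
def frobG {α β : Type*} [Fintype α] [Fintype β] (B : Matrix α β ℝ) : ℝ :=
  Real.sqrt (∑ a, ∑ b, B a b ^ 2)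

/-- The `(j,l)` block (an `M × M` matrix) of a `pM × pM` matrix. -/
def blk {p M : ℕ} (A : Matrix (Fin p × Fin M) (Fin p × Fin M) ℝ) (j l : Fin p) :
    Matrix (Fin M) (Fin M) ℝ := fun a b => A (j, a) (l, b)

/-- `M`-block version of the ℓ∞ matrix norm: `max_j Σ_l ‖A_{jl}‖_F`. -/
def blockInfty {p M : ℕ} (A : Matrix (Fin p × Fin M) (Fin p × Fin M) ℝ) : ℝ :=
  ⨆ j, ∑ l, frobG (blk A j l)

/-- `M`-block version of the max (elementwise ℓ∞) norm: `max_{j,l} ‖A_{jl}‖_F`. -/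
def blockMax {p M : ℕ} (A : Matrix (Fin p × Fin M) (Fin p × Fin M) ℝ) : ℝ :=
  ⨆ j, ⨆ l, frobG (blk A j l)

/-- `M`-block version of the ℓ₁ matrix norm: `max_l Σ_j ‖A_{jl}‖_F`. -/
def blockOne {p M : ℕ} (A : Matrix (Fin p × Fin M) (Fin p × Fin M) ℝ) : ℝ :=
  ⨆ l, ∑ j, frobG (blk A j l)

/-- Generalized block ℓ∞ norm, with block-rows/columns indexed by an arbitrary
finite type `ι` and blocks of shape `α × α`. -/
def bInftyG {ι α : Type*} [Fintype ι] [Fintype α] (A : Matrix (ι × α) (ι × α) ℝ) : ℝ :=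
  ⨆ j, ∑ l, frobG (fun a b => A (j, a) (l, b))

/-- Entrywise ℓ₁ norm of a matrix. -/
def ell1 {α β : Type*} [Fintype α] [Fintype β] (A : Matrix α β ℝ) : ℝ :=
  ∑ i, ∑ j, |A i j|

/-- `j`-th block of a vector in `ℝ^{pM}`. -/
def vblk {p M : ℕ} (u : Fin p × Fin M → ℝ) (j : Fin p) : Fin M → ℝ := fun a => u (j, a)

/-- Euclidean norm of a vector. -/
def vnorm2 {M : ℕ} (v : Fin M → ℝ) : ℝ := Real.sqrt (∑ a, v a ^ 2)

/-- Block max norm of a vector in `ℝ^{pM}`: `max_j ‖u_j‖_2`. -/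
def vBlockMax {p M : ℕ} (u : Fin p × Fin M → ℝ) : ℝ := ⨆ j, vnorm2 (vblk u j)

/-- `j`-th block of a `pM × M` vertically stacked block matrix. -/
def sblk {p M : ℕ} (x : Matrix (Fin p × Fin M) (Fin M) ℝ) (j : Fin p) :
    Matrix (Fin M) (Fin M) ℝ := fun a b => x (j, a) b

/-- `max_j ‖x_j‖_F` for a `pM × M` stacked block matrix. -/
def stackMax {p M : ℕ} (x : Matrix (Fin p × Fin M) (Fin M) ℝ) : ℝ :=
  ⨆ j, frobG (sblk x j)

/-- `Σ_j ‖x_j‖_F` for a `pM × M` stacked block matrix. -/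
def stackOne {p M : ℕ} (x : Matrix (Fin p × Fin M) (Fin M) ℝ) : ℝ :=
  ∑ j, frobG (sblk x j)

/-- The block matrix `Ω` with blocks `Ω_{jl} = θ_{jl} Γ_{jl}`. -/
def mkOmega {p M : ℕ} (Θ : Matrix (Fin p) (Fin p) ℝ)
    (G : Matrix (Fin p × Fin M) (Fin p × Fin M) ℝ) :
    Matrix (Fin p × Fin M) (Fin p × Fin M) ℝ :=
  fun x y => Θ x.1 y.1 * G x y

/-- Feasible parameters `(Θ, Γ)` for the joint functional graphical model:
`Θ` symmetric with nonnegative off-diagonal and positive diagonal entries,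
each `Γ^{(k)}` block-symmetric (`Γ_{lj} = Γ_{jl}ᵀ`), and every
`Ω^{(k)} = (θ_{jl} Γ^{(k)}_{jl})` symmetric positive definite. -/
def Feasible {p M K : ℕ} (Θ : Matrix (Fin p) (Fin p) ℝ)
    (Γ : Fin K → Matrix (Fin p × Fin M) (Fin p × Fin M) ℝ) : Prop :=
  Θ.IsSymm ∧ (∀ j l : Fin p, j ≠ l → 0 ≤ Θ j l) ∧ (∀ j : Fin p, 0 < Θ j j) ∧
    (∀ (k : Fin K) (j l : Fin p), blk (Γ k) l j = (blk (Γ k) j l)ᵀ) ∧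
    (∀ k : Fin K, (mkOmega Θ (Γ k)).PosDef)

/-- The negative log-likelihood part `Σ_k [tr(Σ̂^{(k)} Ω^{(k)}) − log det Ω^{(k)}]`. -/
def loss {p M K : ℕ}
    (Sig Ω : Fin K → Matrix (Fin p × Fin M) (Fin p × Fin M) ℝ) : ℝ :=
  ∑ k, (Matrix.trace (Sig k * Ω k) - Real.log (Ω k).det)

/-- `Σ_{j≠l} θ_{jl}`. -/
def pen1 {p : ℕ} (Θ : Matrix (Fin p) (Fin p) ℝ) : ℝ :=
  ∑ q ∈ (Finset.univ : Finset (Fin p)).offDiag, Θ q.1 q.2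

/-- `Σ_{j≠l} Σ_k ‖Γ^{(k)}_{jl}‖_F`. -/
def pen2 {p M K : ℕ} (Γ : Fin K → Matrix (Fin p × Fin M) (Fin p × Fin M) ℝ) : ℝ :=
  ∑ q ∈ (Finset.univ : Finset (Fin p)).offDiag, ∑ k, frobG (blk (Γ k) q.1 q.2)

/-- The objective `Q₁(λ₁, λ₂, Θ, Γ)`. -/
def Q1 {p M K : ℕ} (Sig : Fin K → Matrix (Fin p × Fin M) (Fin p × Fin M) ℝ)
    (l1 l2 : ℝ) (Θ : Matrix (Fin p) (Fin p) ℝ)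
    (Γ : Fin K → Matrix (Fin p × Fin M) (Fin p × Fin M) ℝ) : ℝ :=
  loss Sig (fun k => mkOmega Θ (Γ k)) + l1 * pen1 Θ + l2 * pen2 Γ

/-- The objective `Q₂(λ, Θ, Γ)`. -/
def Q2 {p M K : ℕ} (Sig : Fin K → Matrix (Fin p × Fin M) (Fin p × Fin M) ℝ)
    (lam : ℝ) (Θ : Matrix (Fin p) (Fin p) ℝ)
    (Γ : Fin K → Matrix (Fin p × Fin M) (Fin p × Fin M) ℝ) : ℝ :=
  loss Sig (fun k => mkOmega Θ (Γ k)) + pen1 Θ + lam * pen2 Γ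

/-- The objective `Q₃(λ, Ω)`. -/
def Q3 {p M K : ℕ} (Sig : Fin K → Matrix (Fin p × Fin M) (Fin p × Fin M) ℝ)
    (lam : ℝ) (Ω : Fin K → Matrix (Fin p × Fin M) (Fin p × Fin M) ℝ) : ℝ :=
  loss Sig Ω + lam * ∑ q ∈ (Finset.univ : Finset (Fin p)).offDiag,
    Real.sqrt (∑ k, frobG (blk (Ω k) q.1 q.2))

/-- The ℓ₁ distance `‖Θ − Θ'‖₁ + Σ_k ‖Γ^{(k)} − Γ'^{(k)}‖₁` between parameter pairs. -/
def paramDist {p M K : ℕ} (Θ Θ' : Matrix (Fin p) (Fin p) ℝ)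
    (Γ Γ' : Fin K → Matrix (Fin p × Fin M) (Fin p × Fin M) ℝ) : ℝ :=
  ell1 (Θ - Θ') + ∑ k, ell1 (Γ k - Γ' k)

/-- `(Θ̂, Γ̂)` is a local minimizer of `Q₁(λ₁, λ₂, ·, ·)` (parameters restricted to
`θ_{jj} = 1`). -/
def IsLocalMinQ1 {p M K : ℕ}
    (Sig : Fin K → Matrix (Fin p × Fin M) (Fin p × Fin M) ℝ)
    (l1 l2 : ℝ) (Θh : Matrix (Fin p) (Fin p) ℝ)
    (Γh : Fin K → Matrix (Fin p × Fin M) (Fin p × Fin M) ℝ) : Prop :=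
  (Feasible Θh Γh ∧ ∀ j, Θh j j = 1) ∧
    ∃ δ > 0, ∀ Θ Γ, Feasible Θ Γ → (∀ j, Θ j j = 1) →
      paramDist Θ Θh Γ Γh < δ → Q1 Sig l1 l2 Θh Γh ≤ Q1 Sig l1 l2 Θ Γ

/-- `(Θ̂, Γ̂)` is a local minimizer of `Q₂(λ, ·, ·)` over the full parameter space. -/
def IsLocalMinQ2 {p M K : ℕ}
    (Sig : Fin K → Matrix (Fin p × Fin M) (Fin p × Fin M) ℝ)
    (lam : ℝ) (Θh : Matrix (Fin p) (Fin p) ℝ)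
    (Γh : Fin K → Matrix (Fin p × Fin M) (Fin p × Fin M) ℝ) : Prop :=
  Feasible Θh Γh ∧
    ∃ δ > 0, ∀ Θ Γ, Feasible Θ Γ →
      paramDist Θ Θh Γ Γh < δ → Q2 Sig lam Θh Γh ≤ Q2 Sig lam Θ Γ

/-- `Ω̂` is a local minimizer of `Q₃(λ, ·)` over `K`-tuples of symmetric positive
definite matrices. -/
def IsLocalMinQ3 {p M K : ℕ}
    (Sig : Fin K → Matrix (Fin p × Fin M) (Fin p × Fin M) ℝ)
    (lam : ℝ) (Ωh : Fin K → Matrix (Fin p × Fin M) (Fin p × Fin M) ℝ) : Prop :=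
  (∀ k, (Ωh k).PosDef) ∧
    ∃ δ > 0, ∀ Ω : Fin K → Matrix (Fin p × Fin M) (Fin p × Fin M) ℝ,
      (∀ k, (Ω k).PosDef) →
      (∑ k, ell1 (Ω k - Ωh k)) < δ → Q3 Sig lam Ωh ≤ Q3 Sig lam Ω


lemma frobG_nonneg {α β : Type*} [Fintype α] [Fintype β] (B : Matrix α β ℝ) :
    0 ≤ frobG B := Real.sqrt_nonneg _

lemma abs_le_frobG {α β : Type*} [Fintype α] [Fintype β] (B : Matrix α β ℝ) (a : α) (b : β) :
    |B a b| ≤ frobG B := by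
  rw [frobG, ← Real.sqrt_sq_eq_abs]
  apply Real.sqrt_le_sqrt
  calc B a b ^ 2 ≤ ∑ b', B a b' ^ 2 :=
        Finset.single_le_sum (f := fun b' => B a b' ^ 2) (fun _ _ => sq_nonneg _) (Finset.mem_univ b)
    _ ≤ ∑ a', ∑ b', B a' b' ^ 2 :=
        Finset.single_le_sum (f := fun a' => ∑ b', B a' b' ^ 2)
          (fun _ _ => Finset.sum_nonneg fun _ _ => sq_nonneg _) (Finset.mem_univ a)

lemma eq_zero_of_frobG_eq_zero {α β : Type*} [Fintype α] [Fintype β] {B : Matrix α β ℝ}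
    (h : frobG B = 0) (a : α) (b : β) : B a b = 0 := by
  have := abs_le_frobG B a b
  rw [h] at this
  exact abs_eq_zero.mp (le_antisymm this (abs_nonneg _))

lemma frobG_smul {α β : Type*} [Fintype α] [Fintype β] (t : ℝ) (B : Matrix α β ℝ) :
    frobG (fun a b => t * B a b) = |t| * frobG B := by
  unfold frobG
  rw [← Real.sqrt_sq_eq_abs, ← Real.sqrt_mul (sq_nonneg t)]
  congr 1
  simp_rw [Finset.mul_sum, mul_pow]

lemma frobG_swap {α β : Type*} [Fintype α] [Fintype β] (B : Matrix α β ℝ) :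
    frobG (fun b a => B a b) = frobG B := by
  unfold frobG
  rw [Finset.sum_comm]

lemma two_sqrt_mul_le {a b : ℝ} (ha : 0 ≤ a) (hb : 0 ≤ b) :
    2 * Real.sqrt (a * b) ≤ a + b := by
  nlinarith [sq_nonneg (Real.sqrt a - Real.sqrt b), Real.sq_sqrt ha, Real.sq_sqrt hb,
    Real.sqrt_mul_self ha, Real.sqrt_mul ha b, Real.sqrt_nonneg a, Real.sqrt_nonneg b]

lemma sum_offDiag_two {p : ℕ} {j l : Fin p} (hjl : j ≠ l) (f g : Fin p × Fin p → ℝ)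
    (h : ∀ q ∈ (Finset.univ : Finset (Fin p)).offDiag, q ≠ (j,l) → q ≠ (l,j) → f q = g q) :
    ∑ q ∈ (Finset.univ : Finset (Fin p)).offDiag, f q =
      (∑ q ∈ (Finset.univ : Finset (Fin p)).offDiag, g q) +
        (f (j,l) - g (j,l)) + (f (l,j) - g (l,j)) := by
  have hsub : ({(j,l), (l,j)} : Finset (Fin p × Fin p)) ⊆ (Finset.univ : Finset (Fin p)).offDiag := by
    intro q hq
    simp only [Finset.mem_insert, Finset.mem_singleton] at hq
    rcases hq with rfl | rfl <;> simp [Finset.mem_offDiag, hjl, hjl.symm]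
  have hne : ((j,l) : Fin p × Fin p) ≠ (l,j) := by
    simp [Prod.ext_iff]; intro h'; exact absurd h' hjl
  have key : ∑ q ∈ (Finset.univ : Finset (Fin p)).offDiag, (f q - g q)
      = ∑ q ∈ ({(j,l), (l,j)} : Finset (Fin p × Fin p)), (f q - g q) := by
    rw [Finset.sum_subset hsub]
    intro x hx hx'
    simp only [Finset.mem_insert, Finset.mem_singleton, not_or] at hx'
    rw [h x hx hx'.1 hx'.2]; ring
  rw [Finset.sum_pair hne] at key
  rw [Finset.sum_sub_distrib] at key
  linarith


lemma balance {p M K : ℕ} {l1 l2 : ℝ} (hl1 : 0 < l1) (hl2 : 0 < l2)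
    {Sig : Fin K → Matrix (Fin p × Fin M) (Fin p × Fin M) ℝ}
    {Θh : Matrix (Fin p) (Fin p) ℝ}
    {Γh : Fin K → Matrix (Fin p × Fin M) (Fin p × Fin M) ℝ}
    (h : IsLocalMinQ1 Sig l1 l2 Θh Γh) {j l : Fin p} (hjl : j ≠ l) :
    l1 * Θh j l = l2 * ∑ k, frobG (blk (Γh k) j l) := by
  classical
  obtain ⟨⟨hfeas, hdiag⟩, δ, hδ, hmin⟩ := h
  obtain ⟨hsym, hnn, hpos, hblk, hpd⟩ := hfeas
  -- perturbed parameters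
  set cond : Fin p → Fin p → Prop := fun x y => (x = j ∧ y = l) ∨ (x = l ∧ y = j) with hcond
  have condsymm : ∀ x y, cond x y ↔ cond y x := by
    intro x y
    simp only [hcond]
    tauto
  set ΘC : ℝ → Matrix (Fin p) (Fin p) ℝ :=
    fun c x y => if cond x y then c * Θh x y else Θh x y with hΘC
  set ΓC : ℝ → Fin K → Matrix (Fin p × Fin M) (Fin p × Fin M) ℝ :=
    fun c k x y => if cond x.1 y.1 then c⁻¹ * Γh k x y else Γh k x y with hΓC
  have hmkeq : ∀ c : ℝ, c ≠ 0 → ∀ k, mkOmega (ΘC c) (ΓC c k) = mkOmega Θh (Γh k) := by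
    intro c hc k
    funext x y
    simp only [mkOmega, hΘC, hΓC]
    by_cases hxy : cond x.1 y.1
    · rw [if_pos hxy, if_pos hxy]; field_simp
    · rw [if_neg hxy, if_neg hxy]
  have hcond_diag : ∀ x : Fin p, ¬ cond x x := by
    rintro x (⟨rfl, rfl⟩ | ⟨rfl, rfl⟩) <;> exact hjl rfl
  have hfeasC : ∀ c : ℝ, 0 < c → Feasible (ΘC c) (ΓC c) := by
    intro c hc
    refine ⟨?_, ?_, ?_, ?_, ?_⟩
    · -- symm
      ext x y
      simp only [Matrix.transpose_apply]; simp only [hΘC]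
      by_cases hxy : cond x y
      · rw [if_pos hxy, if_pos ((condsymm x y).mp hxy)]
        rw [hsym.apply y x]
      · rw [if_neg hxy, if_neg (fun hh => hxy ((condsymm y x).mp hh))]
        rw [hsym.apply y x]
    · intro x y hxy
      simp only [hΘC]
      split
      · exact mul_nonneg hc.le (hnn x y hxy)
      · exact hnn x y hxy
    · intro x
      simp only [hΘC, if_neg (hcond_diag x)]
      exact hpos x
    · intro k j' l'
      funext a b
      simp only [blk, Matrix.transpose_apply, hΓC]
      have hb := congrFun (congrFun (hblk k j' l') a) b
      simp only [blk, Matrix.transpose_apply] at hb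
      by_cases hxy : cond l' j'
      · rw [if_pos hxy, if_pos ((condsymm l' j').mp hxy), hb]
      · rw [if_neg hxy, if_neg (fun hh => hxy ((condsymm j' l').mp hh)), hb]
    · intro k
      rw [hmkeq c hc.ne' k]
      exact hpd k
  have hdiagC : ∀ c : ℝ, ∀ x : Fin p, ΘC c x x = 1 := by
    intro c x
    simp only [hΘC, if_neg (hcond_diag x)]
    exact hdiag x
  -- quantities
  set g : ℝ := ∑ k, frobG (blk (Γh k) j l) with hg
  have hgnn : 0 ≤ g := Finset.sum_nonneg fun _ _ => frobG_nonneg _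
  have hθnn : 0 ≤ Θh j l := hnn j l hjl
  have hglj : ∑ k, frobG (blk (Γh k) l j) = g := by
    rw [hg]
    refine Finset.sum_congr rfl fun k _ => ?_
    rw [hblk k j l]
    exact frobG_swap _
  have hθlj : Θh l j = Θh j l := hsym.apply j l
  -- Q1 formula for perturbed parameters
  have hQ1 : ∀ c : ℝ, 0 < c → Q1 Sig l1 l2 (ΘC c) (ΓC c) =
      Q1 Sig l1 l2 Θh Γh + (c - 1) * (2 * (l1 * Θh j l)) + (c⁻¹ - 1) * (2 * (l2 * g)) := by
    intro c hc
    have hloss : loss Sig (fun k => mkOmega (ΘC c) (ΓC c k)) =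
        loss Sig (fun k => mkOmega Θh (Γh k)) := by
      unfold loss
      refine Finset.sum_congr rfl fun k _ => ?_
      simp only []
      rw [hmkeq c hc.ne' k]
    have hpen1 : pen1 (ΘC c) = pen1 Θh + (c - 1) * Θh j l + (c - 1) * Θh l j := by
      unfold pen1
      have := sum_offDiag_two hjl (fun q => ΘC c q.1 q.2) (fun q => Θh q.1 q.2) ?_
      · rw [this]
        have h1 : cond j l := Or.inl ⟨rfl, rfl⟩
        have h2 : cond l j := Or.inr ⟨rfl, rfl⟩
        simp only [hΘC, if_pos h1, if_pos h2]
        ring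
      · intro q hq hq1 hq2
        have : ¬ cond q.1 q.2 := by
          rintro (⟨ha, hb⟩ | ⟨ha, hb⟩)
          · exact hq1 (Prod.ext ha hb)
          · exact hq2 (Prod.ext ha hb)
        simp only [hΘC, if_neg this]
    have hblkC : ∀ k q1 q2, blk (ΓC c k) q1 q2 =
        fun a b => (if cond q1 q2 then c⁻¹ else 1) * Γh k (q1, a) (q2, b) := by
      intro k q1 q2
      funext a b
      simp only [blk, hΓC]
      split <;> simp
    have hpen2 : pen2 (ΓC c) = pen2 Γh + (c⁻¹ - 1) * g + (c⁻¹ - 1) * g := by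
      unfold pen2
      have := sum_offDiag_two hjl (fun q => ∑ k, frobG (blk (ΓC c k) q.1 q.2))
        (fun q => ∑ k, frobG (blk (Γh k) q.1 q.2)) ?_
      · rw [this]
        have h1 : cond j l := Or.inl ⟨rfl, rfl⟩
        have h2 : cond l j := Or.inr ⟨rfl, rfl⟩
        have e1 : ∀ (q1 q2 : Fin p), cond q1 q2 →
            ∑ k, frobG (blk (ΓC c k) q1 q2) = c⁻¹ * ∑ k, frobG (blk (Γh k) q1 q2) := by
          intro q1 q2 hq
          rw [Finset.mul_sum]
          refine Finset.sum_congr rfl fun k _ => ?_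
          rw [hblkC k q1 q2]
          simp only [if_pos hq]
          exact (frobG_smul c⁻¹ (blk (Γh k) q1 q2)).trans (by rw [abs_of_pos (inv_pos.mpr hc)])
        rw [e1 j l h1, e1 l j h2]
        simp only [hglj]
        ring
      · intro q hq hq1 hq2
        have hnc : ¬ cond q.1 q.2 := by
          rintro (⟨ha, hb⟩ | ⟨ha, hb⟩)
          · exact hq1 (Prod.ext ha hb)
          · exact hq2 (Prod.ext ha hb)
        refine Finset.sum_congr rfl fun k _ => ?_
        congr 1
        rw [hblkC k q.1 q.2]
        simp only [if_neg hnc]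
        funext a b
        simp [blk]
    unfold Q1
    rw [hloss, hpen1, hpen2, hθlj]
    ring
  -- paramDist bound
  set T : ℝ := ell1 Θh + ∑ k, ell1 (Γh k) + 1 with hT
  have hT1 : 1 ≤ T := by
    have h1 : 0 ≤ ell1 Θh := Finset.sum_nonneg fun _ _ => Finset.sum_nonneg fun _ _ => abs_nonneg _
    have h2 : 0 ≤ ∑ k, ell1 (Γh k) :=
      Finset.sum_nonneg fun k _ => Finset.sum_nonneg fun _ _ => Finset.sum_nonneg fun _ _ => abs_nonneg _
    simp only [hT]; linarith
  have hTpos : 0 < T := lt_of_lt_of_le one_pos hT1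
  have hpdist : ∀ c : ℝ, 1/2 < c → paramDist (ΘC c) Θh (ΓC c) Γh ≤ 3 * |c - 1| * T := by
    intro c hc
    have hc0 : 0 < c := lt_trans (by norm_num) hc
    have hΘbd : ell1 (ΘC c - Θh) ≤ |c - 1| * ell1 Θh := by
      unfold ell1
      rw [Finset.mul_sum]
      refine Finset.sum_le_sum fun x _ => ?_
      rw [Finset.mul_sum]
      refine Finset.sum_le_sum fun y _ => ?_
      simp only [Matrix.sub_apply]; simp only [hΘC]
      split
      · rw [show c * Θh x y - Θh x y = (c - 1) * Θh x y by ring, abs_mul]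
      · simp [abs_nonneg, mul_nonneg (abs_nonneg (c-1)) (abs_nonneg _)]
    have hinvb : |c⁻¹ - 1| ≤ 2 * |c - 1| := by
      have h1 : c⁻¹ - 1 = (1 - c) / c := by field_simp
      rw [h1, abs_div, abs_of_pos hc0, div_le_iff₀ hc0, abs_sub_comm 1 c]
      nlinarith [abs_nonneg (c - 1)]
    have hΓbd : ∀ k, ell1 (ΓC c k - Γh k) ≤ |c⁻¹ - 1| * ell1 (Γh k) := by
      intro k
      unfold ell1
      rw [Finset.mul_sum]
      refine Finset.sum_le_sum fun x _ => ?_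
      rw [Finset.mul_sum]
      refine Finset.sum_le_sum fun y _ => ?_
      simp only [Matrix.sub_apply]; simp only [hΓC]
      split
      · rw [show c⁻¹ * Γh k x y - Γh k x y = (c⁻¹ - 1) * Γh k x y by ring, abs_mul]
      · simp [mul_nonneg (abs_nonneg (c⁻¹-1)) (abs_nonneg _)]
    have hsum : ∑ k, ell1 (ΓC c k - Γh k) ≤ |c⁻¹ - 1| * ∑ k, ell1 (Γh k) := by
      rw [Finset.mul_sum]
      exact Finset.sum_le_sum fun k _ => hΓbd k
    unfold paramDist
    have h2 : |c⁻¹ - 1| * ∑ k, ell1 (Γh k) ≤ 2 * |c - 1| * ∑ k, ell1 (Γh k) := by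
      have h2' : 0 ≤ ∑ k, ell1 (Γh k) :=
        Finset.sum_nonneg fun k _ => Finset.sum_nonneg fun _ _ => Finset.sum_nonneg fun _ _ => abs_nonneg _
      exact mul_le_mul_of_nonneg_right hinvb h2'
    have h1' : 0 ≤ ell1 Θh := Finset.sum_nonneg fun _ _ => Finset.sum_nonneg fun _ _ => abs_nonneg _
    have h2' : 0 ≤ ∑ k, ell1 (Γh k) :=
      Finset.sum_nonneg fun k _ => Finset.sum_nonneg fun _ _ => Finset.sum_nonneg fun _ _ => abs_nonneg _
    have habs : 0 ≤ |c - 1| := abs_nonneg _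
    simp only [hT]
    nlinarith
  -- the one-variable function
  set f : ℝ → ℝ := fun c => (c - 1) * (2 * (l1 * Θh j l)) + (c⁻¹ - 1) * (2 * (l2 * g)) with hf
  have hlocmin : IsLocalMin f 1 := by
    have hr : 0 < min (1/4 : ℝ) (δ / (3 * T)) := by
      refine lt_min (by norm_num) (div_pos hδ (by positivity))
    rw [IsLocalMin, IsMinFilter]
    rw [Metric.eventually_nhds_iff]
    refine ⟨min (1/4 : ℝ) (δ / (3 * T)), hr, fun c hcd => ?_⟩
    have hcd1 : |c - 1| < 1/4 := lt_of_lt_of_le (by simpa [Real.dist_eq] using hcd) (min_le_left _ _)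
    have hcd2 : |c - 1| < δ / (3 * T) := lt_of_lt_of_le (by simpa [Real.dist_eq] using hcd) (min_le_right _ _)
    have hchalf : 1/2 < c := by
      have := abs_lt.mp hcd1
      linarith [this.1]
    have hc0 : 0 < c := by linarith
    have hpd' : paramDist (ΘC c) Θh (ΓC c) Γh < δ := by
      have := hpdist c hchalf
      have h3 : 3 * |c - 1| * T < δ := by
        rw [lt_div_iff₀ (by positivity : (0:ℝ) < 3 * T)] at hcd2
        calc 3 * |c - 1| * T = |c - 1| * (3 * T) := by ring
          _ < δ := hcd2
      linarith
    have := hmin (ΘC c) (ΓC c) (hfeasC c hc0) (hdiagC c) hpd'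
    rw [hQ1 c hc0] at this
    have hf1 : f 1 = 0 := by simp [hf]
    rw [hf1, hf]
    linarith
  have hderiv : HasDerivAt f (2 * (l1 * Θh j l) - 2 * (l2 * g)) 1 := by
    have h1 : HasDerivAt (fun c : ℝ => (c - 1) * (2 * (l1 * Θh j l)))
        (2 * (l1 * Θh j l)) 1 := by
      simpa using ((hasDerivAt_id (1:ℝ)).sub_const 1).mul_const (2 * (l1 * Θh j l))
    have h2 : HasDerivAt (fun c : ℝ => (c⁻¹ - 1) * (2 * (l2 * g)))
        (-(2 * (l2 * g))) 1 := by
      have := (hasDerivAt_inv (one_ne_zero (α := ℝ))).sub_const 1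
      have := this.mul_const (2 * (l2 * g))
      simpa using this
    exact (h1.add h2).congr_deriv (by ring)
  have := hlocmin.hasDerivAt_eq_zero hderiv
  linarith
def thetaOf (l1 l2 : ℝ) {p M K : ℕ} (Ω : Fin K → Matrix (Fin p × Fin M) (Fin p × Fin M) ℝ) :
    Matrix (Fin p) (Fin p) ℝ :=
  fun j l => if j = l then 1 else Real.sqrt (l2 / l1 * ∑ k, frobG (blk (Ω k) j l))

def gammaOf (l1 l2 : ℝ) {p M K : ℕ} (Ω : Fin K → Matrix (Fin p × Fin M) (Fin p × Fin M) ℝ) :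
    Fin K → Matrix (Fin p × Fin M) (Fin p × Fin M) ℝ :=
  fun k x y => if thetaOf l1 l2 Ω x.1 y.1 = 0 then 0 else Ω k x y / thetaOf l1 l2 Ω x.1 y.1

lemma thetaOf_apply (l1 l2 : ℝ) {p M K : ℕ}
    (Ω : Fin K → Matrix (Fin p × Fin M) (Fin p × Fin M) ℝ) (j l : Fin p) :
    thetaOf l1 l2 Ω j l =
      if j = l then 1 else Real.sqrt (l2 / l1 * ∑ k, frobG (blk (Ω k) j l)) := rfl

lemma gammaOf_apply (l1 l2 : ℝ) {p M K : ℕ}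
    (Ω : Fin K → Matrix (Fin p × Fin M) (Fin p × Fin M) ℝ) (k : Fin K) (x y : Fin p × Fin M) :
    gammaOf l1 l2 Ω k x y =
      if thetaOf l1 l2 Ω x.1 y.1 = 0 then 0 else Ω k x y / thetaOf l1 l2 Ω x.1 y.1 := rfl

lemma sum_frob_nonneg {p M K : ℕ} (Ω : Fin K → Matrix (Fin p × Fin M) (Fin p × Fin M) ℝ)
    (j l : Fin p) : 0 ≤ ∑ k, frobG (blk (Ω k) j l) :=
  Finset.sum_nonneg fun _ _ => frobG_nonneg _

lemma thetaOf_nonneg {l1 l2 : ℝ} {p M K : ℕ}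
    {Ω : Fin K → Matrix (Fin p × Fin M) (Fin p × Fin M) ℝ} (j l : Fin p) :
    0 ≤ thetaOf l1 l2 Ω j l := by
  rw [thetaOf_apply]
  split
  · norm_num
  · exact Real.sqrt_nonneg _

lemma entries_zero_of_thetaOf_eq_zero {l1 l2 : ℝ} (hl1 : 0 < l1) (hl2 : 0 < l2) {p M K : ℕ}
    {Ω : Fin K → Matrix (Fin p × Fin M) (Fin p × Fin M) ℝ} {j l : Fin p}
    (h : thetaOf l1 l2 Ω j l = 0) (k : Fin K) (a b : Fin M) : Ω k (j, a) (l, b) = 0 := by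
  have hjl : j ≠ l := by
    intro hjl
    rw [thetaOf_apply, if_pos hjl] at h
    norm_num at h
  rw [thetaOf_apply, if_neg hjl] at h
  have hs : 0 ≤ ∑ k, frobG (blk (Ω k) j l) := sum_frob_nonneg Ω j l
  have hzero : l2 / l1 * ∑ k, frobG (blk (Ω k) j l) = 0 := by
    have h' := Real.sqrt_eq_zero'.mp h
    have h'' : 0 ≤ l2 / l1 * ∑ k, frobG (blk (Ω k) j l) :=
      mul_nonneg (le_of_lt (div_pos hl2 hl1)) hs
    linarith
  have hs0 : ∑ k, frobG (blk (Ω k) j l) = 0 := by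
    rcases mul_eq_zero.mp hzero with h' | h'
    · exact absurd h' (ne_of_gt (div_pos hl2 hl1))
    · exact h'
  have hfk : frobG (blk (Ω k) j l) = 0 := by
    have := (Finset.sum_eq_zero_iff_of_nonneg (fun k _ => frobG_nonneg (blk (Ω k) j l))).mp hs0
    exact this k (Finset.mem_univ k)
  exact eq_zero_of_frobG_eq_zero hfk a b

lemma posdef_entry_symm {n : Type*} [Fintype n] {A : Matrix n n ℝ} (h : A.IsHermitian)
    (x y : n) : A y x = A x y := by
  have := congrFun (congrFun h.eq x) y
  simpa [Matrix.conjTranspose_apply] using this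

lemma mkOmega_construct {l1 l2 : ℝ} (hl1 : 0 < l1) (hl2 : 0 < l2) {p M K : ℕ}
    {Ω : Fin K → Matrix (Fin p × Fin M) (Fin p × Fin M) ℝ} (k : Fin K) :
    mkOmega (thetaOf l1 l2 Ω) (gammaOf l1 l2 Ω k) = Ω k := by
  funext x y
  simp only [mkOmega, gammaOf]
  by_cases h : thetaOf l1 l2 Ω x.1 y.1 = 0
  · rw [if_pos h, mul_zero]
    exact (entries_zero_of_thetaOf_eq_zero hl1 hl2 h k x.2 y.2).symm
  · rw [if_neg h]
    field_simp

lemma feasible_construct {l1 l2 : ℝ} (hl1 : 0 < l1) (hl2 : 0 < l2) {p M K : ℕ}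
    {Ω : Fin K → Matrix (Fin p × Fin M) (Fin p × Fin M) ℝ} (hΩ : ∀ k, (Ω k).PosDef) :
    Feasible (thetaOf l1 l2 Ω) (gammaOf l1 l2 Ω) := by
  have hsymΩ : ∀ k (x y : Fin p × Fin M), Ω k y x = Ω k x y :=
    fun k => posdef_entry_symm (hΩ k).isHermitian
  have hθsym : ∀ j l : Fin p, thetaOf l1 l2 Ω l j = thetaOf l1 l2 Ω j l := by
    intro j l
    unfold thetaOf
    by_cases hjl : j = l
    · subst hjl; simp
    · rw [if_neg (Ne.symm hjl), if_neg hjl]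
      congr 2
      refine Finset.sum_congr rfl fun k _ => ?_
      have : blk (Ω k) l j = fun a b => blk (Ω k) j l b a := by
        funext a b
        simp only [blk]
        exact hsymΩ k (j, b) (l, a)
      rw [this, frobG_swap]
  refine ⟨?_, ?_, ?_, ?_, ?_⟩
  · ext x y
    simp only [Matrix.transpose_apply]
    exact hθsym x y
  · intro x y _; exact thetaOf_nonneg x y
  · intro x; simp [thetaOf]
  · intro k j' l'
    funext a b
    simp only [blk, Matrix.transpose_apply, gammaOf]
    rw [hθsym j' l']
    by_cases h : thetaOf l1 l2 Ω j' l' = 0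
    · rw [if_pos h, if_pos h]
    · rw [if_neg h, if_neg h, hsymΩ k (j', b) (l', a)]
  · intro k
    rw [mkOmega_construct hl1 hl2 k]
    exact hΩ k

lemma Q1_construct {l1 l2 : ℝ} (hl1 : 0 < l1) (hl2 : 0 < l2) {p M K : ℕ}
    (Sig : Fin K → Matrix (Fin p × Fin M) (Fin p × Fin M) ℝ)
    {Ω : Fin K → Matrix (Fin p × Fin M) (Fin p × Fin M) ℝ} :
    Q1 Sig l1 l2 (thetaOf l1 l2 Ω) (gammaOf l1 l2 Ω) =
      Q3 Sig (2 * Real.sqrt (l1 * l2)) Ω := by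
  have hmg : (fun k => mkOmega (thetaOf l1 l2 Ω) (gammaOf l1 l2 Ω k)) = Ω := by
    funext k
    exact mkOmega_construct hl1 hl2 k
  unfold Q1 Q3
  rw [hmg]
  have key : l1 * pen1 (thetaOf l1 l2 Ω) + l2 * pen2 (gammaOf l1 l2 Ω) =
      2 * Real.sqrt (l1 * l2) * ∑ q ∈ (Finset.univ : Finset (Fin p)).offDiag,
        Real.sqrt (∑ k, frobG (blk (Ω k) q.1 q.2)) := by
    unfold pen1 pen2
    rw [Finset.mul_sum, Finset.mul_sum, Finset.mul_sum, ← Finset.sum_add_distrib]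
    refine Finset.sum_congr rfl fun q hq => ?_
    have hq' := Finset.mem_offDiag.mp hq
    have hjl : q.1 ≠ q.2 := hq'.2.2
    set s : ℝ := ∑ k, frobG (blk (Ω k) q.1 q.2) with hs
    have hsnn : 0 ≤ s := sum_frob_nonneg Ω q.1 q.2
    have hθ : thetaOf l1 l2 Ω q.1 q.2 = Real.sqrt (l2 / l1 * s) := by
      rw [thetaOf_apply, if_neg hjl]
    by_cases h0 : thetaOf l1 l2 Ω q.1 q.2 = 0
    · have hs0 : s = 0 := by
        rw [hθ] at h0
        have h' := Real.sqrt_eq_zero'.mp h0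
        have hc : 0 < l2 / l1 := div_pos hl2 hl1
        nlinarith
      have hfz : ∀ k, frobG (blk (gammaOf l1 l2 Ω k) q.1 q.2) = 0 := by
        intro k
        have : blk (gammaOf l1 l2 Ω k) q.1 q.2 = fun _ _ => (0:ℝ) := by
          funext a b
          simp only [blk, gammaOf, if_pos h0]
        rw [this]
        simp [frobG]
      rw [h0]
      simp only [hfz]
      simp [hs0]
    · have hspos : 0 < s := by
        rcases lt_or_eq_of_le hsnn with h' | h'
        · exact h'
        · exfalso; apply h0; rw [hθ, ← h']; simp
      have hθpos : 0 < thetaOf l1 l2 Ω q.1 q.2 := by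
        rw [hθ]
        exact Real.sqrt_pos.mpr (mul_pos (div_pos hl2 hl1) hspos)
      have hfg : ∀ k, frobG (blk (gammaOf l1 l2 Ω k) q.1 q.2) =
          (thetaOf l1 l2 Ω q.1 q.2)⁻¹ * frobG (blk (Ω k) q.1 q.2) := by
        intro k
        have : blk (gammaOf l1 l2 Ω k) q.1 q.2 =
            fun a b => (thetaOf l1 l2 Ω q.1 q.2)⁻¹ * blk (Ω k) q.1 q.2 a b := by
          funext a b
          simp only [blk, gammaOf, if_neg h0]
          rw [div_eq_inv_mul]
        rw [this, frobG_smul, abs_of_pos (inv_pos.mpr hθpos)]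
      simp only [hfg]
      rw [← Finset.mul_sum, ← hs, hθ]
      -- goal : l1 * √(l2/l1*s) + l2 * ((√(l2/l1*s))⁻¹ * s) = 2√(l1 l2) * √s
      have e1 : l1 * Real.sqrt (l2 / l1 * s) = Real.sqrt (l1 * l2 * s) := by
        rw [← Real.sqrt_sq hl1.le, ← Real.sqrt_mul (sq_nonneg l1)]
        congr 1
        field_simp
        ring
        rw [Real.sq_sqrt (sq_nonneg l1)]
      have hcs : 0 < l2 / l1 * s := mul_pos (div_pos hl2 hl1) hspos
      have e2 : l2 * ((Real.sqrt (l2 / l1 * s))⁻¹ * s) = Real.sqrt (l1 * l2 * s) := by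
        rw [mul_comm ((Real.sqrt (l2 / l1 * s))⁻¹) s, ← div_eq_mul_inv, ← mul_div_assoc,
          div_eq_iff (ne_of_gt (Real.sqrt_pos.mpr hcs)),
          ← Real.sqrt_mul (mul_nonneg (mul_nonneg hl1.le hl2.le) hsnn)]
        rw [show l1 * l2 * s * (l2 / l1 * s) = (l2 * s)^2 by field_simp]
        rw [Real.sqrt_sq (mul_nonneg hl2.le hsnn)]
      have e3 : 2 * Real.sqrt (l1 * l2) * Real.sqrt s = 2 * Real.sqrt (l1 * l2 * s) := by
        rw [mul_assoc, ← Real.sqrt_mul (mul_nonneg hl1.le hl2.le)]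
      rw [e1, e2, e3]
      ring
  rw [← key]
  ring

lemma frob_blk_mkOmega {p M : ℕ} (Θ : Matrix (Fin p) (Fin p) ℝ)
    (G : Matrix (Fin p × Fin M) (Fin p × Fin M) ℝ) (j l : Fin p) (hθ : 0 ≤ Θ j l) :
    frobG (blk (mkOmega Θ G) j l) = Θ j l * frobG (blk G j l) := by
  have : blk (mkOmega Θ G) j l = fun a b => Θ j l * blk G j l a b := rfl
  rw [this, frobG_smul, abs_of_nonneg hθ]

lemma Q1_eq_Q3_at_min {p M K : ℕ} {l1 l2 : ℝ} (hl1 : 0 < l1) (hl2 : 0 < l2)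
    {Sig : Fin K → Matrix (Fin p × Fin M) (Fin p × Fin M) ℝ}
    {Θh : Matrix (Fin p) (Fin p) ℝ}
    {Γh : Fin K → Matrix (Fin p × Fin M) (Fin p × Fin M) ℝ}
    (h : IsLocalMinQ1 Sig l1 l2 Θh Γh) :
    Q1 Sig l1 l2 Θh Γh = Q3 Sig (2 * Real.sqrt (l1 * l2)) (fun k => mkOmega Θh (Γh k)) := by
  obtain ⟨⟨⟨hsym, hnn, hpos, hblk, hpd⟩, hdiag⟩, -⟩ := id h
  unfold Q1 Q3
  have key : l1 * pen1 Θh + l2 * pen2 Γh =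
      2 * Real.sqrt (l1 * l2) * ∑ q ∈ (Finset.univ : Finset (Fin p)).offDiag,
        Real.sqrt (∑ k, frobG (blk (mkOmega Θh (Γh k)) q.1 q.2)) := by
    unfold pen1 pen2
    rw [Finset.mul_sum, Finset.mul_sum, Finset.mul_sum, ← Finset.sum_add_distrib]
    refine Finset.sum_congr rfl fun q hq => ?_
    have hjl : q.1 ≠ q.2 := (Finset.mem_offDiag.mp hq).2.2
    have hθnn : 0 ≤ Θh q.1 q.2 := hnn q.1 q.2 hjl
    have hbal := balance hl1 hl2 h hjl
    have hfrob : ∀ k, frobG (blk (mkOmega Θh (Γh k)) q.1 q.2) =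
        Θh q.1 q.2 * frobG (blk (Γh k) q.1 q.2) := fun k =>
      frob_blk_mkOmega Θh (Γh k) q.1 q.2 hθnn
    simp only [hfrob]
    rw [← Finset.mul_sum]
    set G : ℝ := ∑ k, frobG (blk (Γh k) q.1 q.2) with hG
    have hGnn : 0 ≤ G := sum_frob_nonneg Γh q.1 q.2
    have hm : 0 ≤ l1 * Θh q.1 q.2 := mul_nonneg hl1.le hθnn
    calc l1 * Θh q.1 q.2 + l2 * G = 2 * (l1 * Θh q.1 q.2) := by rw [← hbal]; ring
      _ = 2 * Real.sqrt (l1 * l2) * Real.sqrt (Θh q.1 q.2 * G) := by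
          rw [mul_assoc, ← Real.sqrt_mul (mul_nonneg hl1.le hl2.le),
            show l1 * l2 * (Θh q.1 q.2 * G) = (l1 * Θh q.1 q.2) * (l2 * G) by ring,
            ← hbal, Real.sqrt_mul_self hm]
  rw [← key]
  ring


lemma construct_at_min {p M K : ℕ} {l1 l2 : ℝ} (hl1 : 0 < l1) (hl2 : 0 < l2)
    {Sig : Fin K → Matrix (Fin p × Fin M) (Fin p × Fin M) ℝ}
    {Θh : Matrix (Fin p) (Fin p) ℝ}
    {Γh : Fin K → Matrix (Fin p × Fin M) (Fin p × Fin M) ℝ}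
    (h : IsLocalMinQ1 Sig l1 l2 Θh Γh) :
    thetaOf l1 l2 (fun k => mkOmega Θh (Γh k)) = Θh ∧
      gammaOf l1 l2 (fun k => mkOmega Θh (Γh k)) = Γh := by
  obtain ⟨⟨⟨hsym, hnn, hpos, hblk, hpd⟩, hdiag⟩, -⟩ := id h
  have hθ : thetaOf l1 l2 (fun k => mkOmega Θh (Γh k)) = Θh := by
    funext j l
    rw [thetaOf_apply]
    by_cases hjl : j = l
    · rw [if_pos hjl, hjl, hdiag l]
    · rw [if_neg hjl]
      have hθnn : 0 ≤ Θh j l := hnn j l hjl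
      have hbal := balance hl1 hl2 h hjl
      have hfrob : ∀ k : Fin K, frobG (blk (mkOmega Θh (Γh k)) j l) =
          Θh j l * frobG (blk (Γh k) j l) := fun k =>
        frob_blk_mkOmega Θh (Γh k) j l hθnn
      simp only [hfrob]
      rw [← Finset.mul_sum]
      rw [show l2 / l1 * (Θh j l * ∑ k, frobG (blk (Γh k) j l)) =
        Θh j l * (l2 * ∑ k, frobG (blk (Γh k) j l)) / l1 by ring, ← hbal,
        show Θh j l * (l1 * Θh j l) / l1 = Θh j l ^ 2 by field_simp]
      exact Real.sqrt_sq hθnn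
  refine ⟨hθ, ?_⟩
  funext k x y
  rw [gammaOf_apply, hθ]
  by_cases h0 : Θh x.1 y.1 = 0
  · rw [if_pos h0]
    have hjl : x.1 ≠ y.1 := by
      intro hh
      rw [hh, hdiag y.1] at h0
      norm_num at h0
    have hbal := balance hl1 hl2 h hjl
    rw [h0, mul_zero] at hbal
    have hG0 : ∑ k, frobG (blk (Γh k) x.1 y.1) = 0 := by
      have := sum_frob_nonneg Γh x.1 y.1
      nlinarith
    have hf0 : frobG (blk (Γh k) x.1 y.1) = 0 :=
      (Finset.sum_eq_zero_iff_of_nonneg (fun k _ => frobG_nonneg _)).mp hG0 k (Finset.mem_univ k)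
    exact (eq_zero_of_frobG_eq_zero hf0 x.2 y.2).symm
  · rw [if_neg h0]
    show Θh x.1 y.1 * Γh k x y / Θh x.1 y.1 = Γh k x y
    field_simp


lemma div_sqrt_helper {l1 l2 s : ℝ} (hl1 : 0 < l1) (hl2 : 0 < l2) (hs : 0 ≤ s) :
    s / Real.sqrt (l2 / l1 * s) = Real.sqrt (l1 / l2 * s) := by
  rcases eq_or_lt_of_le hs with h | h
  · simp [← h]
  · rw [div_eq_iff (ne_of_gt (Real.sqrt_pos.mpr (mul_pos (div_pos hl2 hl1) h)))]
    rw [← Real.sqrt_mul (le_of_lt (mul_pos (div_pos hl1 hl2) h))]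
    rw [show l1 / l2 * s * (l2 / l1 * s) = s ^ 2 by field_simp]
    exact (Real.sqrt_sq hs).symm

lemma param_continuity {p M K : ℕ} {l1 l2 : ℝ} (hl1 : 0 < l1) (hl2 : 0 < l2)
    (Ωh : Fin K → ((Fin p × Fin M) → (Fin p × Fin M) → ℝ))
    {Θh : Matrix (Fin p) (Fin p) ℝ}
    {Γh : Fin K → Matrix (Fin p × Fin M) (Fin p × Fin M) ℝ}
    (hθ : thetaOf l1 l2 Ωh = Θh) (hγ : gammaOf l1 l2 Ωh = Γh)
    {δ : ℝ} (hδ : 0 < δ) :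
    ∃ δ' > 0, ∀ Ω : Fin K → ((Fin p × Fin M) → (Fin p × Fin M) → ℝ),
      (∑ k, ell1 (Ω k - Ωh k)) < δ' →
      paramDist (thetaOf l1 l2 Ω) Θh (gammaOf l1 l2 Ω) Γh < δ := by
  classical
  -- continuity of the block Frobenius sums
  have hs_cont : ∀ j l : Fin p, Continuous (fun v : Fin K → ((Fin p × Fin M) → (Fin p × Fin M) → ℝ) => ∑ k, frobG (blk (v k) j l)) := by
    intro j l
    have : (fun v : Fin K → ((Fin p × Fin M) → (Fin p × Fin M) → ℝ) => ∑ k, frobG (blk (v k) j l)) =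
        fun v : Fin K → ((Fin p × Fin M) → (Fin p × Fin M) → ℝ) => ∑ k, Real.sqrt (∑ a, ∑ b, (v k (j, a) (l, b)) ^ 2) := rfl
    rw [this]
    refine continuous_finset_sum _ fun k _ => Real.continuous_sqrt.comp ?_
    refine continuous_finset_sum _ fun a _ => continuous_finset_sum _ fun b _ => ?_
    exact ((continuous_apply (l, b)).comp
      ((continuous_apply (j, a)).comp (continuous_apply k))).pow 2
  have hΘ_cont : ∀ j l : Fin p, Continuous (fun v : Fin K → ((Fin p × Fin M) → (Fin p × Fin M) → ℝ) => thetaOf l1 l2 v j l) := by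
    intro j l
    by_cases hjl : j = l
    · have : (fun v : Fin K → ((Fin p × Fin M) → (Fin p × Fin M) → ℝ) => thetaOf l1 l2 v j l) = fun _ => (1:ℝ) := by
        funext v; rw [thetaOf_apply (Ω := v), if_pos hjl]
      rw [this]; exact continuous_const
    · have : (fun v : Fin K → ((Fin p × Fin M) → (Fin p × Fin M) → ℝ) => thetaOf l1 l2 v j l) =
          fun v : Fin K → ((Fin p × Fin M) → (Fin p × Fin M) → ℝ) => Real.sqrt (l2 / l1 * ∑ k, frobG (blk (v k) j l)) := by
        funext v; rw [thetaOf_apply (Ω := v), if_neg hjl]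
      rw [this]
      exact Real.continuous_sqrt.comp (continuous_const.mul (hs_cont j l))
  have hΓ_cont : ∀ (k : Fin K) (x y : Fin p × Fin M),
      ContinuousAt (fun v : Fin K → ((Fin p × Fin M) → (Fin p × Fin M) → ℝ) => gammaOf l1 l2 v k x y) Ωh := by
    intro k x y
    by_cases h0 : thetaOf l1 l2 Ωh x.1 y.1 = 0
    · -- squeeze to 0
      have hjl : x.1 ≠ y.1 := by
        intro hh
        rw [thetaOf_apply (Ω := Ωh), if_pos hh] at h0
        norm_num at h0
      have hval : gammaOf l1 l2 Ωh k x y = 0 := by rw [gammaOf_apply (Ω := Ωh), if_pos h0]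
      have hshat : ∑ k', frobG (blk (Ωh k') x.1 y.1) = 0 := by
        rw [thetaOf_apply (Ω := Ωh), if_neg hjl] at h0
        have h1 := Real.sqrt_eq_zero'.mp h0
        have h2 : 0 ≤ ∑ k', frobG (blk (Ωh k') x.1 y.1) := sum_frob_nonneg Ωh x.1 y.1
        have hc : 0 < l2 / l1 := div_pos hl2 hl1
        nlinarith
      rw [ContinuousAt, hval]
      have hg_cont : Continuous
          (fun v : Fin K → ((Fin p × Fin M) → (Fin p × Fin M) → ℝ) => Real.sqrt (l1 / l2 * ∑ k', frobG (blk (v k') x.1 y.1))) :=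
        Real.continuous_sqrt.comp (continuous_const.mul (hs_cont x.1 y.1))
      have h0' : Real.sqrt (l1 / l2 * ∑ k', frobG (blk (Ωh k') x.1 y.1)) = 0 := by
        rw [hshat]; simp
      have hgt : Filter.Tendsto
          (fun v : Fin K → ((Fin p × Fin M) → (Fin p × Fin M) → ℝ) => Real.sqrt (l1 / l2 * ∑ k', frobG (blk (v k') x.1 y.1)))
          (nhds Ωh) (nhds 0) := by
        have h1 := hg_cont.continuousAt (x := Ωh)
        rw [ContinuousAt] at h1
        rw [← h0']
        exact h1
      refine squeeze_zero_norm (fun v => ?_) hgt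
      rw [Real.norm_eq_abs, gammaOf_apply (Ω := v)]
      split
      · simpa using Real.sqrt_nonneg _
      · rename_i hne
        have hsvnn : 0 ≤ ∑ k', frobG (blk (v k') x.1 y.1) := sum_frob_nonneg v x.1 y.1
        have hθv : thetaOf l1 l2 v x.1 y.1 =
            Real.sqrt (l2 / l1 * ∑ k', frobG (blk (v k') x.1 y.1)) := by
          rw [thetaOf_apply (Ω := v), if_neg hjl]
        have hθvnn : 0 < thetaOf l1 l2 v x.1 y.1 := by
          rcases lt_or_eq_of_le (hθv ▸ Real.sqrt_nonneg _ :
              0 ≤ thetaOf l1 l2 v x.1 y.1) with h' | h'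
          · exact h'
          · exact absurd h'.symm hne
        have hentry : |v k x y| ≤ ∑ k', frobG (blk (v k') x.1 y.1) := by
          have h1 : |v k x y| ≤ frobG (blk (v k) x.1 y.1) :=
            abs_le_frobG (blk (v k) x.1 y.1) x.2 y.2
          have h2 : frobG (blk (v k) x.1 y.1) ≤ ∑ k', frobG (blk (v k') x.1 y.1) :=
            Finset.single_le_sum (f := fun k' => frobG (blk (v k') x.1 y.1))
              (fun _ _ => frobG_nonneg _) (Finset.mem_univ k)
          linarith
        rw [abs_div, abs_of_pos hθvnn]
        calc |v k x y| / thetaOf l1 l2 v x.1 y.1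
            ≤ (∑ k', frobG (blk (v k') x.1 y.1)) / thetaOf l1 l2 v x.1 y.1 := by gcongr
          _ = Real.sqrt (l1 / l2 * ∑ k', frobG (blk (v k') x.1 y.1)) := by
              rw [hθv]; exact div_sqrt_helper hl1 hl2 hsvnn
    · -- eventually the quotient formula
      have hev : ∀ᶠ v in nhds Ωh, thetaOf l1 l2 v x.1 y.1 ≠ 0 :=
        ((hΘ_cont x.1 y.1).continuousAt).eventually_ne h0
      have heq : (fun v : Fin K → ((Fin p × Fin M) → (Fin p × Fin M) → ℝ) => v k x y / thetaOf l1 l2 v x.1 y.1) =ᶠ[nhds Ωh]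
          (fun v : Fin K → ((Fin p × Fin M) → (Fin p × Fin M) → ℝ) => gammaOf l1 l2 v k x y) := by
        filter_upwards [hev] with v hv
        rw [gammaOf_apply (Ω := v), if_neg hv]
      refine ContinuousAt.congr ?_ heq
      have hnum : ContinuousAt (fun v : Fin K → ((Fin p × Fin M) → (Fin p × Fin M) → ℝ) => v k x y) Ωh :=
        (((continuous_apply y).comp ((continuous_apply x).comp (continuous_apply k)))).continuousAt
      exact hnum.div ((hΘ_cont x.1 y.1).continuousAt) h0
  -- continuity of the distance functional
  set D : (Fin K → ((Fin p × Fin M) → (Fin p × Fin M) → ℝ)) → ℝ := fun v => paramDist (thetaOf l1 l2 v) Θh (gammaOf l1 l2 v) Γh with hD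
  have hD_cont : ContinuousAt D Ωh := by
    rw [hD]
    unfold paramDist ell1
    refine ContinuousAt.add ?_ ?_
    · refine tendsto_finset_sum _ fun i _ => tendsto_finset_sum _ fun j _ => ?_
      exact (((hΘ_cont i j).continuousAt).sub continuousAt_const).abs
    · refine tendsto_finset_sum _ fun k _ => tendsto_finset_sum _ fun x _ =>
        tendsto_finset_sum _ fun y _ => ?_
      exact ((hΓ_cont k x y).sub continuousAt_const).abs
  have hD0 : D Ωh = 0 := by
    rw [hD]
    simp only [hθ, hγ]
    unfold paramDist ell1
    simp
  rw [ContinuousAt, hD0] at hD_cont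
  have := Metric.tendsto_nhds.mp hD_cont δ hδ
  rw [Metric.eventually_nhds_iff] at this
  obtain ⟨δ', hδ', hball⟩ := this
  refine ⟨δ', hδ', fun Ω hΩ => ?_⟩
  have hsum_nn : ∀ k, 0 ≤ ell1 (Ω k - Ωh k) := by
    intro k
    exact Finset.sum_nonneg fun _ _ => Finset.sum_nonneg fun _ _ => abs_nonneg _
  have hdist : dist Ω Ωh < δ' := by
    rw [dist_pi_lt_iff hδ']
    intro k
    rw [dist_pi_lt_iff hδ']
    intro x
    rw [dist_pi_lt_iff hδ']
    intro y
    rw [Real.dist_eq]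
    have h1 : |Ω k x y - Ωh k x y| ≤ ell1 (Ω k - Ωh k) := by
      unfold ell1
      calc |Ω k x y - Ωh k x y| = |(Ω k - Ωh k) x y| := rfl
        _ ≤ ∑ y', |(Ω k - Ωh k) x y'| :=
            Finset.single_le_sum (f := fun y' => |(Ω k - Ωh k) x y'|)
              (fun _ _ => abs_nonneg _) (Finset.mem_univ y)
        _ ≤ ∑ x', ∑ y', |(Ω k - Ωh k) x' y'| :=
            Finset.single_le_sum (f := fun x' => ∑ y', |(Ω k - Ωh k) x' y'|)
              (fun _ _ => Finset.sum_nonneg fun _ _ => abs_nonneg _) (Finset.mem_univ x)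
    have h2 : ell1 (Ω k - Ωh k) ≤ ∑ k', ell1 (Ω k' - Ωh k') :=
      Finset.single_le_sum (f := fun k' => ell1 (Ω k' - Ωh k')) (fun k' _ => hsum_nn k')
        (Finset.mem_univ k)
    linarith
  have := hball hdist
  rw [Real.dist_eq, sub_zero] at this
  calc D Ω ≤ |D Ω| := le_abs_self _
    _ < δ := this


/-- Theorem 2, first direction. If `(Θ̂, Γ̂)` is a local minimizer of
`Q₁(λ₁, λ₂, ·, ·)`, then there is a local minimizer `Ω̂` of `Q₃(2√(λ₁λ₂), ·)` with
`Ω̂^{(k)}_{jl} = θ̂_{jl} Γ̂^{(k)}_{jl}` for all `j, l, k`. -/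
theorem statement_0 {p M K : ℕ} (hp : 2 ≤ p) (hM : 1 ≤ M) (hK : 1 ≤ K)
    (l1 l2 : ℝ) (hl1 : 0 < l1) (hl2 : 0 < l2)
    (Sig : Fin K → Matrix (Fin p × Fin M) (Fin p × Fin M) ℝ)
    (hSig : ∀ k, (Sig k).IsSymm)
    (Θh : Matrix (Fin p) (Fin p) ℝ)
    (Γh : Fin K → Matrix (Fin p × Fin M) (Fin p × Fin M) ℝ)
    (h : IsLocalMinQ1 Sig l1 l2 Θh Γh) :
    ∃ Ωh : Fin K → Matrix (Fin p × Fin M) (Fin p × Fin M) ℝ,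
      IsLocalMinQ3 Sig (2 * Real.sqrt (l1 * l2)) Ωh ∧
        ∀ k, Ωh k = mkOmega Θh (Γh k) := by
  obtain ⟨⟨hfeas, hdiag⟩, δ, hδ, hmin⟩ := id h
  refine ⟨fun k => mkOmega Θh (Γh k), ⟨hfeas.2.2.2.2, ?_⟩, fun k => rfl⟩
  obtain ⟨hθeq, hγeq⟩ := construct_at_min hl1 hl2 h
  obtain ⟨δ', hδ', hcont⟩ := param_continuity hl1 hl2 (fun k => mkOmega Θh (Γh k)) hθeq hγeq hδ
  refine ⟨δ', hδ', fun Ω hΩpd hdist => ?_⟩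
  have h1 : Q3 Sig (2 * Real.sqrt (l1 * l2)) (fun k => mkOmega Θh (Γh k)) =
      Q1 Sig l1 l2 Θh Γh := (Q1_eq_Q3_at_min hl1 hl2 h).symm
  have h2 : Q1 Sig l1 l2 Θh Γh ≤ Q1 Sig l1 l2 (thetaOf l1 l2 Ω) (gammaOf l1 l2 Ω) := by
    apply hmin
    · exact feasible_construct hl1 hl2 hΩpd
    · intro j; rw [thetaOf_apply, if_pos rfl]
    · exact hcont Ω hdist
  have h3 : Q1 Sig l1 l2 (thetaOf l1 l2 Ω) (gammaOf l1 l2 Ω) =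
      Q3 Sig (2 * Real.sqrt (l1 * l2)) Ω := Q1_construct hl1 hl2 Sig
  linarith
end JF
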